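/- Let r > 0, let U be a d×d random matrix and V a d-dimensional random vector with E[‖U‖^r] ≤ 1, E[‖U‖^s] < 1 for all s ∈ (0,r), and 0 < E[|V|^r] < ∞ (and E[‖U‖^{r−k}|V|^k] < ∞ for all integers 0 ≤ k ≤ ⌊r⌋). Then there exist constants c_1, …, c_{⌊r⌋} > 0 such that the function g(x) = |x|^r + c_1|x|^{r−1} + ⋯ + c_{⌊r⌋}|x|^{r−⌊r⌋} (g(x) = |x|^r if r ≤ 1) satisfies E[g(Ux + V)] − g(x) ≤ E[g(V)] for all x ∈ ℝ^d. -/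

import Mathlib

open MeasureTheory ProbabilityTheory Finset

/-- Operator norm (w.r.t. the Euclidean norm) of a real square matrix. -/
noncomputable def opN {d : ℕ} (M : Matrix (Fin d) (Fin d) ℝ) : ℝ :=
  ‖Matrix.toEuclideanCLM (𝕜 := ℝ) M‖

/-- The Lyapunov-type function g(x) = |x|^r + ∑_{k=1}^{⌊r⌋} c_k |x|^{r-k}. -/
noncomputable def lyapG {d : ℕ} (r : ℝ) (c : ℕ → ℝ) (y : EuclideanSpace ℝ (Fin d)) : ℝ :=
  ‖y‖ ^ r + ∑ k ∈ Finset.Icc 1 ⌊r⌋₊, c k * ‖y‖ ^ (r - k)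

lemma my_rpow_add_le {a b p : ℝ} (ha : 0 ≤ a) (hb : 0 ≤ b) (hp : 0 ≤ p) (hp1 : p ≤ 1) :
    (a + b) ^ p ≤ a ^ p + b ^ p := by
  have h := NNReal.rpow_add_le_add_rpow a.toNNReal b.toNNReal hp hp1
  have h2 := NNReal.coe_le_coe.mpr h
  push_cast at h2
  rwa [Real.coe_toNNReal a ha, Real.coe_toNNReal b hb] at h2

lemma my_le_one_add_rpow {a s t : ℝ} (ha : 0 ≤ a) (hs : 0 ≤ s) (hst : s ≤ t) :
    a ^ s ≤ 1 + a ^ t := by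
  rcases le_total a 1 with h | h
  · refine (Real.rpow_le_one ha h hs).trans ?_
    have := Real.rpow_nonneg ha t
    linarith
  · exact (Real.rpow_le_rpow_of_exponent_le h hst).trans (by
      have : (0:ℝ) ≤ a ^ t := Real.rpow_nonneg (by linarith) t
      linarith)

lemma my_rpow_mvt {a b s : ℝ} (ha : 0 ≤ a) (hb : 0 ≤ b) (hs : 1 ≤ s) :
    (a + b) ^ s ≤ a ^ s + s * (a + b) ^ (s - 1) * b := by
  rcases eq_or_lt_of_le (add_nonneg ha hb) with h | h
  · rw [← h, Real.zero_rpow (by linarith : s ≠ 0)]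
    have h1 : (0:ℝ) ≤ a ^ s := Real.rpow_nonneg ha s
    have h2 : (0:ℝ) ≤ s * (0:ℝ) ^ (s - 1) * b := by
      have h3 := Real.rpow_nonneg (le_refl (0:ℝ)) (s - 1)
      have h4 : (0:ℝ) ≤ s := by linarith
      positivity
    linarith
  · have hab := h
    have hB : -1 ≤ a / (a + b) - 1 := by
      have : 0 ≤ a / (a + b) := div_nonneg ha hab.le
      linarith
    have h1 := one_add_mul_self_le_rpow_one_add hB hs
    have h1' : 1 + s * (a / (a + b) - 1) ≤ (a / (a + b)) ^ s := by
      have e : 1 + (a / (a + b) - 1) = a / (a + b) := by ring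
      rwa [e] at h1
    have hnn : (0:ℝ) ≤ (a + b) ^ s := Real.rpow_nonneg hab.le s
    have h2 : (1 + s * (a / (a + b) - 1)) * (a + b) ^ s ≤ a ^ s := by
      calc (1 + s * (a / (a + b) - 1)) * (a + b) ^ s
          ≤ (a / (a + b)) ^ s * (a + b) ^ s := mul_le_mul_of_nonneg_right h1' hnn
        _ = a ^ s := by
            rw [Real.div_rpow ha hab.le, div_mul_cancel₀]
            exact (Real.rpow_pos_of_pos hab s).ne'
    have h4 : (a + b) ^ (s - 1) = (a + b) ^ s / (a + b) := by
      rw [Real.rpow_sub hab, Real.rpow_one]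
    calc (a + b) ^ s
        = (1 + s * (a / (a + b) - 1)) * (a + b) ^ s + s * ((a + b) ^ s / (a + b)) * b := by
          field_simp
          ring
      _ ≤ a ^ s + s * ((a + b) ^ s / (a + b)) * b := by linarith
      _ = a ^ s + s * (a + b) ^ (s - 1) * b := by rw [h4]

lemma my_key_cross {s τ a b : ℝ} (hs : 1 ≤ s) (hτ0 : 0 < τ) (hτ1 : τ ≤ 1)
    (ha : 0 ≤ a) (hb : 0 ≤ b) :
    (a + b) ^ s ≤ a ^ s + b ^ s + s * 2 ^ s * (a ^ (s - 1) * b + a ^ τ * b ^ (s - τ)) := by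
  have hs0 : (0:ℝ) ≤ s := by linarith
  have h2s : (0:ℝ) < 2 ^ s := Real.rpow_pos_of_pos two_pos s
  have h2mono : (2:ℝ) ^ (s - 1) ≤ 2 ^ s := Real.rpow_le_rpow_of_exponent_le one_le_two (by linarith)
  rcases le_total b a with hba | hab
  · have h1 := my_rpow_mvt ha hb hs
    have h2 : (a + b) ^ (s - 1) ≤ 2 ^ s * a ^ (s - 1) := by
      calc (a + b) ^ (s - 1) ≤ (2 * a) ^ (s - 1) :=
            Real.rpow_le_rpow (by linarith) (by linarith) (by linarith)
        _ = 2 ^ (s - 1) * a ^ (s - 1) := Real.mul_rpow (by norm_num) ha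
        _ ≤ 2 ^ s * a ^ (s - 1) :=
            mul_le_mul_of_nonneg_right h2mono (Real.rpow_nonneg ha _)
    have h3 : s * (a + b) ^ (s - 1) * b ≤ s * (2 ^ s * a ^ (s - 1)) * b :=
      mul_le_mul_of_nonneg_right (mul_le_mul_of_nonneg_left h2 hs0) hb
    have h4 : (0:ℝ) ≤ b ^ s := Real.rpow_nonneg hb s
    have h5 : (0:ℝ) ≤ s * 2 ^ s * (a ^ τ * b ^ (s - τ)) := by
      have := Real.rpow_nonneg ha τ
      have := Real.rpow_nonneg hb (s - τ)
      positivity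
    nlinarith [h1, h3]
  · rcases eq_or_lt_of_le hb with hb0 | hb0
    · have ha0 : a = 0 := le_antisymm (by linarith) ha
      rw [ha0, ← hb0]
      rw [add_zero, Real.zero_rpow (by linarith : s ≠ 0)]
      have e1 : (0:ℝ) ≤ (0:ℝ) ^ (s-1) := Real.rpow_nonneg le_rfl _
      have e2 : (0:ℝ) ≤ (0:ℝ) ^ τ := Real.rpow_nonneg le_rfl _
      have e3 : (0:ℝ) ≤ (0:ℝ) ^ (s-τ) := Real.rpow_nonneg le_rfl _
      have e4 : (0:ℝ) ≤ (0:ℝ) ^ s := Real.rpow_nonneg le_rfl _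
      nlinarith [mul_nonneg (mul_nonneg hs0 h2s.le) (mul_nonneg e2 e3)]
    · have h1 : (a + b) ^ s ≤ b ^ s + s * (a + b) ^ (s - 1) * a := by
        have := my_rpow_mvt hb ha hs
        rwa [add_comm b a] at this
      have h2 : (a + b) ^ (s - 1) ≤ 2 ^ s * b ^ (s - 1) := by
        calc (a + b) ^ (s - 1) ≤ (2 * b) ^ (s - 1) :=
              Real.rpow_le_rpow (by linarith) (by linarith) (by linarith)
          _ = 2 ^ (s - 1) * b ^ (s - 1) := Real.mul_rpow (by norm_num) hb
          _ ≤ 2 ^ s * b ^ (s - 1) :=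
              mul_le_mul_of_nonneg_right h2mono (Real.rpow_nonneg hb _)
      have h5 : a * b ^ (s - 1) ≤ a ^ τ * b ^ (s - τ) := by
        have e1 : a = a ^ τ * a ^ (1 - τ) := by
          rw [← Real.rpow_add' ha (by norm_num : τ + (1 - τ) ≠ 0)]
          norm_num
        have e2 : a ^ (1 - τ) ≤ b ^ (1 - τ) := Real.rpow_le_rpow ha hab (by linarith)
        have e3 : b ^ (s - τ) = b ^ (1 - τ) * b ^ (s - 1) := by
          rw [← Real.rpow_add hb0]
          ring_nf
        calc a * b ^ (s - 1) = a ^ τ * (a ^ (1 - τ) * b ^ (s - 1)) := by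
              conv_lhs => rw [e1]
              ring
          _ ≤ a ^ τ * (b ^ (1 - τ) * b ^ (s - 1)) := by
              apply mul_le_mul_of_nonneg_left _ (Real.rpow_nonneg ha τ)
              exact mul_le_mul_of_nonneg_right e2 (Real.rpow_nonneg hb _)
          _ = a ^ τ * b ^ (s - τ) := by rw [e3]
      have h3 : s * (a + b) ^ (s - 1) * a ≤ s * 2 ^ s * (a ^ τ * b ^ (s - τ)) := by
        calc s * (a + b) ^ (s - 1) * a ≤ s * (2 ^ s * b ^ (s - 1)) * a :=
              mul_le_mul_of_nonneg_right (mul_le_mul_of_nonneg_left h2 hs0) ha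
          _ = s * 2 ^ s * (a * b ^ (s - 1)) := by ring
          _ ≤ s * 2 ^ s * (a ^ τ * b ^ (s - τ)) :=
              mul_le_mul_of_nonneg_left h5 (by positivity)
      have h4 : (0:ℝ) ≤ a ^ s := Real.rpow_nonneg ha s
      have h6 : (0:ℝ) ≤ s * 2 ^ s * (a ^ (s - 1) * b) := by
        have := Real.rpow_nonneg ha (s - 1)
        positivity
      nlinarith [h1, h3]

lemma my_absorb (N M : ℕ) (r τ T X : ℝ) (ρ Cc m1 m2 : ℕ → ℝ)
    (hX : 0 ≤ X) (hT : 1 ≤ T)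
    (hρ0 : ρ 0 ≤ 1)
    (hρ : ∀ m ∈ Finset.Icc 1 N, ρ m ≤ 1)
    (hM1 : 1 < r → 1 ≤ M) (hMN : M ≤ N)
    (hτM : τ = r - (M:ℝ))
    (hjM : ∀ j : ℕ, 1 < r - (j:ℝ) → j < M)
    (hnn : ∀ j ∈ Finset.Icc 0 N, 1 < r - (j:ℝ) → 0 ≤ Cc j * m1 j ∧ 0 ≤ Cc j * m2 j)
    (hb1 : ∀ j ∈ Finset.Icc 0 N, 1 < r - (j:ℝ) → Cc j * m1 j ≤ T * (1 - ρ (j+1)) / 2)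
    (hb2 : ∀ j ∈ Finset.Icc 0 N, 1 < r - (j:ℝ) →
      ((N:ℝ)+1) * (Cc j * m2 j) ≤ T * (1 - ρ M) / 2) :
    ∑ j ∈ Finset.Icc 0 N, T ^ j * (ρ j * X ^ (r - (j:ℝ)) +
      (if 1 < r - (j:ℝ) then Cc j * (m1 j * X ^ (r - (j:ℝ) - 1) + m2 j * X ^ τ) else 0))
    ≤ ∑ j ∈ Finset.Icc 0 N, T ^ j * X ^ (r - (j:ℝ)) := by
  classical
  have hT0 : (0:ℝ) ≤ T := by linarith
  set Ψ : ℕ → ℝ := fun m => T ^ m * ((1 - ρ m) * X ^ (r - (m:ℝ))) with hΨdef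
  have hΨnn : ∀ m ∈ Finset.Icc 1 N, 0 ≤ Ψ m := by
    intro m hm
    have h1 := hρ m hm
    have hXn : 0 ≤ X ^ (r - (m:ℝ)) := Real.rpow_nonneg hX _
    exact mul_nonneg (pow_nonneg hT0 m) (mul_nonneg (by linarith) hXn)
  have hsplit0 : ∀ j ∈ Finset.Icc 0 N,
      T ^ j * (ρ j * X ^ (r - (j:ℝ)) +
        (if 1 < r - (j:ℝ) then Cc j * (m1 j * X ^ (r - (j:ℝ) - 1) + m2 j * X ^ τ) else 0))
      = T ^ j * (ρ j * X ^ (r - (j:ℝ)))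
        + T ^ j * (if 1 < r - (j:ℝ) then Cc j * (m1 j * X ^ (r - (j:ℝ) - 1) + m2 j * X ^ τ) else 0) :=
    fun j _ => by ring
  rw [Finset.sum_congr rfl hsplit0, Finset.sum_add_distrib]
  have key1 : ∑ j ∈ Finset.Icc 0 N, T ^ j * (ρ j * X ^ (r - (j:ℝ)))
      ≤ (∑ j ∈ Finset.Icc 0 N, T ^ j * X ^ (r - (j:ℝ))) - ∑ m ∈ Finset.Icc 1 N, Ψ m := by
    have hins : Finset.Icc 0 N = insert 0 (Finset.Icc 1 N) := by
      ext m; simp only [Finset.mem_Icc, Finset.mem_insert]; omega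
    have h0 : (0:ℕ) ∉ Finset.Icc 1 N := by simp
    rw [hins, Finset.sum_insert h0, Finset.sum_insert h0]
    have hterm : ∀ m ∈ Finset.Icc 1 N, T ^ m * (ρ m * X ^ (r - (m:ℝ)))
        = T ^ m * X ^ (r - (m:ℝ)) - Ψ m := by
      intro m hm; simp only [hΨdef]; ring
    rw [Finset.sum_congr rfl hterm, Finset.sum_sub_distrib]
    have h00 : T ^ 0 * (ρ 0 * X ^ (r - ((0:ℕ):ℝ))) ≤ T ^ 0 * X ^ (r - ((0:ℕ):ℝ)) := by
      simp only [pow_zero, one_mul]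
      have hXn : 0 ≤ X ^ (r - ((0:ℕ):ℝ)) := Real.rpow_nonneg hX _
      nlinarith
    linarith
  have key2 : ∑ j ∈ Finset.Icc 0 N, T ^ j *
      (if 1 < r - (j:ℝ) then Cc j * (m1 j * X ^ (r - (j:ℝ) - 1) + m2 j * X ^ τ) else 0)
      ≤ ∑ m ∈ Finset.Icc 1 N, Ψ m := by
    by_cases hr1 : 1 < r
    · have hM1' : 1 ≤ M := hM1 hr1
      have hMmem : M ∈ Finset.Icc 1 N := by
        simp only [Finset.mem_Icc]; exact ⟨hM1', hMN⟩
      have hΨM : 0 ≤ Ψ M := hΨnn M hMmem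
      have hNpos : (0:ℝ) < 2 * ((N:ℝ)+1) := by positivity
      have hterm : ∀ j ∈ Finset.Icc 0 N,
          T ^ j * (if 1 < r - (j:ℝ) then Cc j * (m1 j * X ^ (r - (j:ℝ) - 1) + m2 j * X ^ τ) else 0)
          ≤ (if 1 < r - (j:ℝ) then (1/2) * Ψ (j+1) else 0)
            + (if 1 < r - (j:ℝ) then (1/(2*((N:ℝ)+1))) * Ψ M else 0) := by
        intro j hj
        by_cases hPj : 1 < r - (j:ℝ)
        · simp only [if_pos hPj]
          obtain ⟨hn1, hn2⟩ := hnn j hj hPj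
          have hjM' := hjM j hPj
          have hp1 : T ^ j * (Cc j * (m1 j * X ^ (r - (j:ℝ) - 1))) ≤ (1/2) * Ψ (j+1) := by
            have h := hb1 j hj hPj
            have hXe : (0:ℝ) ≤ X ^ (r - (j:ℝ) - 1) := Real.rpow_nonneg hX _
            have hmul : T ^ j * X ^ (r - (j:ℝ) - 1) * (Cc j * m1 j)
                ≤ T ^ j * X ^ (r - (j:ℝ) - 1) * (T * (1 - ρ (j+1)) / 2) :=
              mul_le_mul_of_nonneg_left h (mul_nonneg (pow_nonneg hT0 j) hXe)
            have hexp : r - ((j+1 : ℕ):ℝ) = r - (j:ℝ) - 1 := by push_cast; ring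
            calc T ^ j * (Cc j * (m1 j * X ^ (r - (j:ℝ) - 1)))
                = T ^ j * X ^ (r - (j:ℝ) - 1) * (Cc j * m1 j) := by ring
              _ ≤ T ^ j * X ^ (r - (j:ℝ) - 1) * (T * (1 - ρ (j+1)) / 2) := hmul
              _ = (1/2) * Ψ (j+1) := by
                  simp only [hΨdef]
                  rw [hexp, pow_succ]
                  ring
          have hp2 : T ^ j * (Cc j * (m2 j * X ^ τ)) ≤ (1/(2*((N:ℝ)+1))) * Ψ M := by
            have h := hb2 j hj hPj
            have hXe : (0:ℝ) ≤ X ^ τ := Real.rpow_nonneg hX _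
            have hjle : j ≤ M - 1 := Nat.le_sub_one_of_lt hjM'
            have hTj : T ^ j ≤ T ^ (M-1) := pow_le_pow_right₀ hT hjle
            have h' : Cc j * m2 j ≤ T * (1 - ρ M) / (2*((N:ℝ)+1)) := by
              rw [le_div_iff₀ hNpos]
              linarith
            have hTM : T ^ (M-1) * T = T ^ M := by
              rw [← pow_succ, Nat.sub_add_cancel hM1']
            calc T ^ j * (Cc j * (m2 j * X ^ τ))
                = (Cc j * m2 j) * X ^ τ * T ^ j := by ring
              _ ≤ (Cc j * m2 j) * X ^ τ * T ^ (M-1) :=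
                  mul_le_mul_of_nonneg_left hTj (mul_nonneg hn2 hXe)
              _ ≤ (T * (1 - ρ M) / (2*((N:ℝ)+1))) * X ^ τ * T ^ (M-1) :=
                  mul_le_mul_of_nonneg_right (mul_le_mul_of_nonneg_right h' hXe)
                    (pow_nonneg hT0 _)
              _ = (1/(2*((N:ℝ)+1))) * Ψ M := by
                  simp only [hΨdef, hτM]
                  rw [← hTM]
                  ring
          have hsplit : T ^ j * (Cc j * (m1 j * X ^ (r - (j:ℝ) - 1) + m2 j * X ^ τ))
              = T ^ j * (Cc j * (m1 j * X ^ (r - (j:ℝ) - 1)))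
                + T ^ j * (Cc j * (m2 j * X ^ τ)) := by ring
          rw [hsplit]
          exact add_le_add hp1 hp2
        · simp [if_neg hPj]
      have hA : ∑ j ∈ Finset.Icc 0 N, (if 1 < r - (j:ℝ) then (1/2) * Ψ (j+1) else 0)
          ≤ (1/2) * ∑ m ∈ Finset.Icc 1 N, Ψ m := by
        rw [← Finset.sum_filter]
        have himg : ∑ m ∈ ((Finset.Icc 0 N).filter (fun j : ℕ => 1 < r - (j:ℝ))).image
              (fun j : ℕ => j + 1), (1/2) * Ψ m
            = ∑ j ∈ (Finset.Icc 0 N).filter (fun j : ℕ => 1 < r - (j:ℝ)), (1/2) * Ψ (j+1) := by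
          apply Finset.sum_image
          intro x _ y _ hxy
          simp only at hxy
          omega
        rw [← himg, Finset.mul_sum]
        apply Finset.sum_le_sum_of_subset_of_nonneg
        · intro m hm
          simp only [Finset.mem_image, Finset.mem_filter, Finset.mem_Icc] at hm
          obtain ⟨j, ⟨⟨_, hjN⟩, hPj⟩, rfl⟩ := hm
          have := hjM j hPj
          simp only [Finset.mem_Icc]
          omega
        · intro m hm _
          exact mul_nonneg (by norm_num) (hΨnn m hm)
      have hB : ∑ j ∈ Finset.Icc 0 N, (if 1 < r - (j:ℝ) then (1/(2*((N:ℝ)+1))) * Ψ M else 0)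
          ≤ (1/2) * ∑ m ∈ Finset.Icc 1 N, Ψ m := by
        have hle : ∀ j ∈ Finset.Icc 0 N,
            (if 1 < r - (j:ℝ) then (1/(2*((N:ℝ)+1))) * Ψ M else 0)
            ≤ (1/(2*((N:ℝ)+1))) * Ψ M := by
          intro j _
          split_ifs
          · exact le_rfl
          · exact mul_nonneg (by positivity) hΨM
        calc ∑ j ∈ Finset.Icc 0 N, (if 1 < r - (j:ℝ) then (1/(2*((N:ℝ)+1))) * Ψ M else 0)
            ≤ ∑ _j ∈ Finset.Icc 0 N, (1/(2*((N:ℝ)+1))) * Ψ M := Finset.sum_le_sum hle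
          _ = ((N:ℝ)+1) * ((1/(2*((N:ℝ)+1))) * Ψ M) := by
              rw [Finset.sum_const, Nat.card_Icc]
              simp only [Nat.sub_zero, nsmul_eq_mul]
              push_cast
              ring
          _ = (1/2) * Ψ M := by field_simp
          _ ≤ (1/2) * ∑ m ∈ Finset.Icc 1 N, Ψ m := by
              have := Finset.single_le_sum hΨnn hMmem
              linarith
      calc ∑ j ∈ Finset.Icc 0 N, T ^ j *
            (if 1 < r - (j:ℝ) then Cc j * (m1 j * X ^ (r - (j:ℝ) - 1) + m2 j * X ^ τ) else 0)
          ≤ ∑ j ∈ Finset.Icc 0 N, ((if 1 < r - (j:ℝ) then (1/2) * Ψ (j+1) else 0)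
              + (if 1 < r - (j:ℝ) then (1/(2*((N:ℝ)+1))) * Ψ M else 0)) :=
            Finset.sum_le_sum hterm
        _ = (∑ j ∈ Finset.Icc 0 N, (if 1 < r - (j:ℝ) then (1/2) * Ψ (j+1) else 0))
            + ∑ j ∈ Finset.Icc 0 N, (if 1 < r - (j:ℝ) then (1/(2*((N:ℝ)+1))) * Ψ M else 0) :=
            Finset.sum_add_distrib
        _ ≤ (1/2) * (∑ m ∈ Finset.Icc 1 N, Ψ m) + (1/2) * ∑ m ∈ Finset.Icc 1 N, Ψ m :=
            add_le_add hA hB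
        _ = ∑ m ∈ Finset.Icc 1 N, Ψ m := by ring
    · have hz : ∀ j ∈ Finset.Icc 0 N,
          T ^ j * (if 1 < r - (j:ℝ) then Cc j * (m1 j * X ^ (r - (j:ℝ) - 1) + m2 j * X ^ τ) else 0)
          = 0 := by
        intro j _
        have hnPj : ¬ (1 < r - (j:ℝ)) := by
          push_neg at hr1 ⊢
          have : (0:ℝ) ≤ (j:ℝ) := Nat.cast_nonneg j
          linarith
        rw [if_neg hnPj, mul_zero]
      rw [Finset.sum_congr rfl hz, Finset.sum_const_zero]
      exact Finset.sum_nonneg hΨnn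
  linarith

lemma lyapG_sum {d : ℕ} (r : ℝ) (c : ℕ → ℝ) (hc0 : c 0 = 1) (y : EuclideanSpace ℝ (Fin d)) :
    lyapG r c y = ∑ j ∈ Finset.Icc 0 ⌊r⌋₊, c j * ‖y‖ ^ (r - (j:ℝ)) := by
  have hins : Finset.Icc 0 ⌊r⌋₊ = insert 0 (Finset.Icc 1 ⌊r⌋₊) := by
    ext m; simp only [Finset.mem_Icc, Finset.mem_insert]; omega
  have h0 : (0:ℕ) ∉ Finset.Icc 1 ⌊r⌋₊ := by simp
  rw [lyapG, hins, Finset.sum_insert h0, hc0]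
  simp

lemma lyapG_nonneg {d : ℕ} (r : ℝ) (c : ℕ → ℝ) (hc : ∀ k, 0 ≤ c k)
    (y : EuclideanSpace ℝ (Fin d)) : 0 ≤ lyapG r c y := by
  rw [lyapG]
  refine add_nonneg (Real.rpow_nonneg (norm_nonneg _) _) (Finset.sum_nonneg fun k _ => ?_)
  exact mul_nonneg (hc k) (Real.rpow_nonneg (norm_nonneg _) _)

set_option maxHeartbeats 2000000 in
theorem stmt19 {Ω : Type*} [MeasureSpace Ω] [IsProbabilityMeasure (ℙ : Measure Ω)]
    (d : ℕ) (r : ℝ) (hr : 0 < r)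
    (U : Ω → Matrix (Fin d) (Fin d) ℝ) (V : Ω → EuclideanSpace ℝ (Fin d))
    (hUr : Integrable (fun ω => opN (U ω) ^ r) ℙ)
    (hUr1 : ∫ (ω : Ω), opN (U ω) ^ r ∂ℙ ≤ 1)
    (hUs : ∀ s : ℝ, 0 < s → s < r → Integrable (fun ω => opN (U ω) ^ s) ℙ)
    (hUs1 : ∀ s : ℝ, 0 < s → s < r → ∫ (ω : Ω), opN (U ω) ^ s ∂ℙ < 1)
    (hVr : Integrable (fun ω => ‖V ω‖ ^ r) ℙ)
    (hVpos : 0 < ∫ (ω : Ω), ‖V ω‖ ^ r ∂ℙ)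
    (hUV : ∀ k : ℕ, k ≤ ⌊r⌋₊ →
      Integrable (fun ω => opN (U ω) ^ (r - k) * ‖V ω‖ ^ k) ℙ) :
    ∃ c : ℕ → ℝ, (∀ k, 1 ≤ k → k ≤ ⌊r⌋₊ → 0 < c k) ∧
      ∀ x : EuclideanSpace ℝ (Fin d),
        (∫ (ω : Ω), lyapG r c (Matrix.toEuclideanCLM (𝕜 := ℝ) (U ω) x + V ω) ∂ℙ)
            - lyapG r c x
          ≤ ∫ (ω : Ω), lyapG r c (V ω) ∂ℙ := by
  classical
  have hA0 : ∀ ω, 0 ≤ opN (U ω) := fun ω => norm_nonneg _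
  have hB0 : ∀ ω, 0 ≤ ‖V ω‖ := fun ω => norm_nonneg _
  have hNr : ((⌊r⌋₊ : ℕ) : ℝ) ≤ r := Nat.floor_le hr.le
  -- measurability
  have hAm : AEMeasurable (fun ω => opN (U ω)) ℙ := by
    have h1 : AEMeasurable (fun ω => opN (U ω) ^ r) ℙ := hUr.aestronglyMeasurable.aemeasurable
    have h2 : (fun ω => opN (U ω)) = fun ω => (opN (U ω) ^ r) ^ r⁻¹ := by
      funext ω; rw [Real.rpow_rpow_inv (hA0 ω) hr.ne']
    rw [h2]
    exact (Real.continuous_rpow_const (by positivity)).measurable.comp_aemeasurable h1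
  have hBm : AEMeasurable (fun ω => ‖V ω‖) ℙ := by
    have h1 : AEMeasurable (fun ω => ‖V ω‖ ^ r) ℙ := hVr.aestronglyMeasurable.aemeasurable
    have h2 : (fun ω => ‖V ω‖) = fun ω => (‖V ω‖ ^ r) ^ r⁻¹ := by
      funext ω; rw [Real.rpow_rpow_inv (hB0 ω) hr.ne']
    rw [h2]
    exact (Real.continuous_rpow_const (by positivity)).measurable.comp_aemeasurable h1
  have hAq : ∀ q : ℝ, 0 ≤ q → AEMeasurable (fun ω => opN (U ω) ^ q) ℙ := fun q hq =>
    (Real.continuous_rpow_const hq).measurable.comp_aemeasurable hAm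
  have hBq : ∀ q : ℝ, 0 ≤ q → AEMeasurable (fun ω => ‖V ω‖ ^ q) ℙ := fun q hq =>
    (Real.continuous_rpow_const hq).measurable.comp_aemeasurable hBm
  -- integrability
  have hBint : ∀ q : ℝ, 0 ≤ q → q ≤ r → Integrable (fun ω => ‖V ω‖ ^ q) ℙ := by
    intro q h0 h1
    refine Integrable.mono' ((integrable_const (1:ℝ)).add hVr)
      ((hBq q h0).aestronglyMeasurable) ?_
    filter_upwards with ω
    rw [Real.norm_eq_abs, abs_of_nonneg (Real.rpow_nonneg (hB0 ω) q)]
    exact my_le_one_add_rpow (hB0 ω) h0 h1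
  have hAint : ∀ q : ℝ, 0 ≤ q → q ≤ r → Integrable (fun ω => opN (U ω) ^ q) ℙ := by
    intro q h0 h1
    rcases eq_or_lt_of_le h0 with h0' | h0'
    · have he : (fun ω => opN (U ω) ^ q) = fun _ => (1:ℝ) := by
        funext ω; rw [← h0', Real.rpow_zero]
      rw [he]; exact integrable_const 1
    rcases eq_or_lt_of_le h1 with h1' | h1'
    · rw [h1']; exact hUr
    · exact hUs q h0' h1'
  have hABint : ∀ (p : ℝ) (k : ℕ), 0 ≤ p → p ≤ r - (k:ℝ) → k ≤ ⌊r⌋₊ →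
      Integrable (fun ω => opN (U ω) ^ p * ‖V ω‖ ^ ((k:ℕ):ℝ)) ℙ := by
    intro p k hp0 hpk hkN
    have hk_r : ((k:ℕ):ℝ) ≤ r := by
      have h := (Nat.cast_le (α := ℝ)).mpr hkN
      linarith [hNr]
    have hmeas : AEMeasurable (fun ω => opN (U ω) ^ p * ‖V ω‖ ^ ((k:ℕ):ℝ)) ℙ :=
      (hAq p hp0).mul (hBq _ (Nat.cast_nonneg k))
    have hg : Integrable
        (fun ω => (1 + ‖V ω‖ ^ r) + opN (U ω) ^ (r - (k:ℝ)) * ‖V ω‖ ^ ((k:ℕ):ℝ)) ℙ := by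
      have h1 := hUV k hkN
      have h2 : (fun ω => opN (U ω) ^ (r - (k:ℝ)) * ‖V ω‖ ^ ((k:ℕ):ℝ))
          = fun ω => opN (U ω) ^ (r - (k:ℝ)) * ‖V ω‖ ^ (k:ℕ) := by
        funext ω; rw [Real.rpow_natCast]
      refine ((integrable_const (1:ℝ)).add hVr).add ?_
      rw [h2]; exact h1
    refine Integrable.mono' hg hmeas.aestronglyMeasurable ?_
    filter_upwards with ω
    have hb1 : opN (U ω) ^ p ≤ 1 + opN (U ω) ^ (r - (k:ℝ)) :=
      my_le_one_add_rpow (hA0 ω) hp0 hpk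
    have hb2 : ‖V ω‖ ^ ((k:ℕ):ℝ) ≤ 1 + ‖V ω‖ ^ r :=
      my_le_one_add_rpow (hB0 ω) (Nat.cast_nonneg k) hk_r
    have hBk : 0 ≤ ‖V ω‖ ^ ((k:ℕ):ℝ) := Real.rpow_nonneg (hB0 ω) _
    have hAp : 0 ≤ opN (U ω) ^ p := Real.rpow_nonneg (hA0 ω) _
    rw [Real.norm_eq_abs, abs_of_nonneg (mul_nonneg hAp hBk)]
    have hArk : 0 ≤ opN (U ω) ^ (r - (k:ℝ)) := Real.rpow_nonneg (hA0 ω) _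
    nlinarith [mul_le_mul_of_nonneg_right hb1 hBk]
  -- index constants
  have hceil1 : 1 ≤ ⌈r⌉₊ := Nat.one_le_ceil_iff.mpr hr
  have hMcast : ((⌈r⌉₊ - 1 : ℕ) : ℝ) = (⌈r⌉₊ : ℝ) - 1 := by
    push_cast [Nat.cast_sub hceil1]
    ring
  have hMlt : ((⌈r⌉₊ - 1 : ℕ) : ℝ) < r := by
    rw [hMcast]
    have := Nat.ceil_lt_add_one hr.le (R := ℝ)
    linarith
  have hrleM : r ≤ ((⌈r⌉₊ - 1 : ℕ) : ℝ) + 1 := by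
    rw [hMcast]
    have := Nat.le_ceil r
    linarith
  have hMN : ⌈r⌉₊ - 1 ≤ ⌊r⌋₊ := by
    have := Nat.ceil_le_floor_add_one r
    omega
  have hjM : ∀ j : ℕ, 1 < r - (j:ℝ) → j < ⌈r⌉₊ - 1 := by
    intro j hj
    have h1 : (j:ℝ) < ((⌈r⌉₊ - 1 : ℕ) : ℝ) := by linarith
    exact_mod_cast h1
  have hM1 : 1 < r → 1 ≤ ⌈r⌉₊ - 1 := by
    intro h
    have h2 : (1:ℕ) < ⌈r⌉₊ := Nat.lt_ceil.mpr (by exact_mod_cast h)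
    omega
  have hτ0 : 0 < r - ((⌈r⌉₊ - 1 : ℕ) : ℝ) := by linarith
  have hτ1 : r - ((⌈r⌉₊ - 1 : ℕ) : ℝ) ≤ 1 := by linarith
  -- exponents nonneg
  have hsj : ∀ j : ℕ, j ≤ ⌊r⌋₊ → 0 ≤ r - (j:ℝ) := by
    intro j hj
    have h := (Nat.cast_le (α := ℝ)).mpr hj
    linarith [hNr]
  -- rho facts
  have hρlt : ∀ m : ℕ, 1 ≤ m → 0 < r - (m:ℝ) →
      (∫ ω, opN (U ω) ^ (r - (m:ℝ)) ∂ℙ) < 1 := by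
    intro m h1 h2
    refine hUs1 _ h2 ?_
    have h3 : (0:ℝ) < (m:ℝ) := by exact_mod_cast h1
    linarith
  have hρle : ∀ m ∈ Finset.Icc 1 ⌊r⌋₊, (∫ ω, opN (U ω) ^ (r - (m:ℝ)) ∂ℙ) ≤ 1 := by
    intro m hm
    rw [Finset.mem_Icc] at hm
    rcases eq_or_lt_of_le (hsj m hm.2) with h | h
    · have he : (fun ω => opN (U ω) ^ (r - (m:ℝ))) = fun _ => (1:ℝ) := by
        funext ω; rw [← h, Real.rpow_zero]
      rw [he, integral_const]
      simp
    · exact (hρlt m hm.1 h).le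
  have hρ0le : (∫ ω, opN (U ω) ^ (r - ((0:ℕ):ℝ)) ∂ℙ) ≤ 1 := by
    simpa using hUr1
  -- moment nonnegativity
  have hm1nn : ∀ j : ℕ, 0 ≤ ∫ ω, opN (U ω) ^ (r - (j:ℝ) - 1) * ‖V ω‖ ^ ((1:ℕ):ℝ) ∂ℙ :=
    fun j => integral_nonneg fun ω =>
      mul_nonneg (Real.rpow_nonneg (hA0 ω) _) (Real.rpow_nonneg (hB0 ω) _)
  have hm2nn : ∀ j : ℕ, 0 ≤ ∫ ω, opN (U ω) ^ (r - ((⌈r⌉₊ - 1 : ℕ) : ℝ))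
      * ‖V ω‖ ^ (((⌈r⌉₊ - 1 - j : ℕ)):ℝ) ∂ℙ :=
    fun j => integral_nonneg fun ω =>
      mul_nonneg (Real.rpow_nonneg (hA0 ω) _) (Real.rpow_nonneg (hB0 ω) _)
  have hCcnn : ∀ j : ℕ, 1 < r - (j:ℝ) → 0 ≤ (r - (j:ℝ)) * 2 ^ (r - (j:ℝ)) := by
    intro j hj
    have h2 : (0:ℝ) < 2 ^ (r - (j:ℝ)) := Real.rpow_pos_of_pos two_pos _
    nlinarith

  -- abbreviations (as plain expressions)
  -- choice of T
  set T : ℝ := 1 + ∑ j ∈ Finset.Icc 0 ⌊r⌋₊, (if 1 < r - (j:ℝ) then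
      2 * (((r - (j:ℝ)) * 2 ^ (r - (j:ℝ))) *
          (∫ ω, opN (U ω) ^ (r - (j:ℝ) - 1) * ‖V ω‖ ^ ((1:ℕ):ℝ) ∂ℙ))
        / (1 - ∫ ω, opN (U ω) ^ (r - ((j+1:ℕ):ℝ)) ∂ℙ)
      + 2 * ((⌊r⌋₊:ℝ)+1) * (((r - (j:ℝ)) * 2 ^ (r - (j:ℝ))) *
          (∫ ω, opN (U ω) ^ (r - ((⌈r⌉₊ - 1:ℕ):ℝ)) * ‖V ω‖ ^ (((⌈r⌉₊ - 1 - j:ℕ)):ℝ) ∂ℙ))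
        / (1 - ∫ ω, opN (U ω) ^ (r - ((⌈r⌉₊ - 1:ℕ):ℝ)) ∂ℙ)
    else 0) with hTdef
  have hδ1pos : ∀ j : ℕ, 1 < r - (j:ℝ) →
      0 < 1 - ∫ ω, opN (U ω) ^ (r - ((j+1:ℕ):ℝ)) ∂ℙ := by
    intro j hj
    have h := hρlt (j+1) (by omega) (by push_cast; linarith)
    linarith
  have hδMpos : 1 < r → 0 < 1 - ∫ ω, opN (U ω) ^ (r - ((⌈r⌉₊ - 1:ℕ):ℝ)) ∂ℙ := by
    intro h1r
    have h := hρlt (⌈r⌉₊ - 1) (hM1 h1r) hτ0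
    linarith
  have hr_of_P : ∀ j : ℕ, 1 < r - (j:ℝ) → 1 < r := by
    intro j hj
    have : (0:ℝ) ≤ (j:ℝ) := Nat.cast_nonneg j
    linarith
  have hsummand_nn : ∀ j ∈ Finset.Icc 0 ⌊r⌋₊, 0 ≤ (if 1 < r - (j:ℝ) then
      2 * (((r - (j:ℝ)) * 2 ^ (r - (j:ℝ))) *
          (∫ ω, opN (U ω) ^ (r - (j:ℝ) - 1) * ‖V ω‖ ^ ((1:ℕ):ℝ) ∂ℙ))
        / (1 - ∫ ω, opN (U ω) ^ (r - ((j+1:ℕ):ℝ)) ∂ℙ)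
      + 2 * ((⌊r⌋₊:ℝ)+1) * (((r - (j:ℝ)) * 2 ^ (r - (j:ℝ))) *
          (∫ ω, opN (U ω) ^ (r - ((⌈r⌉₊ - 1:ℕ):ℝ)) * ‖V ω‖ ^ (((⌈r⌉₊ - 1 - j:ℕ)):ℝ) ∂ℙ))
        / (1 - ∫ ω, opN (U ω) ^ (r - ((⌈r⌉₊ - 1:ℕ):ℝ)) ∂ℙ)
    else 0) := by
    intro j _
    split_ifs with hP
    · have h1 := hδ1pos j hP
      have h2 := hδMpos (hr_of_P j hP)
      have h3 := hCcnn j hP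
      have h4 := hm1nn j
      have h5 := hm2nn j
      have h6 : (0:ℝ) ≤ (⌊r⌋₊:ℝ) + 1 := by positivity
      apply add_nonneg
      · exact div_nonneg (mul_nonneg (by norm_num) (mul_nonneg h3 h4)) h1.le
      · exact div_nonneg (mul_nonneg (by positivity) (mul_nonneg h3 h5)) h2.le
    · exact le_rfl
  have hT1 : 1 ≤ T := by
    rw [hTdef]
    have := Finset.sum_nonneg hsummand_nn
    linarith
  have hTpos : 0 < T := by linarith
  have hTsingle : ∀ j ∈ Finset.Icc 0 ⌊r⌋₊, (if 1 < r - (j:ℝ) then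
      2 * (((r - (j:ℝ)) * 2 ^ (r - (j:ℝ))) *
          (∫ ω, opN (U ω) ^ (r - (j:ℝ) - 1) * ‖V ω‖ ^ ((1:ℕ):ℝ) ∂ℙ))
        / (1 - ∫ ω, opN (U ω) ^ (r - ((j+1:ℕ):ℝ)) ∂ℙ)
      + 2 * ((⌊r⌋₊:ℝ)+1) * (((r - (j:ℝ)) * 2 ^ (r - (j:ℝ))) *
          (∫ ω, opN (U ω) ^ (r - ((⌈r⌉₊ - 1:ℕ):ℝ)) * ‖V ω‖ ^ (((⌈r⌉₊ - 1 - j:ℕ)):ℝ) ∂ℙ))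
        / (1 - ∫ ω, opN (U ω) ^ (r - ((⌈r⌉₊ - 1:ℕ):ℝ)) ∂ℙ)
    else 0) ≤ T - 1 := by
    intro j hj
    have h := Finset.single_le_sum hsummand_nn hj
    rw [hTdef]
    linarith
  clear_value T
  have hb1T : ∀ j ∈ Finset.Icc 0 ⌊r⌋₊, 1 < r - (j:ℝ) →
      ((r - (j:ℝ)) * 2 ^ (r - (j:ℝ))) *
        (∫ ω, opN (U ω) ^ (r - (j:ℝ) - 1) * ‖V ω‖ ^ ((1:ℕ):ℝ) ∂ℙ)
      ≤ T * (1 - ∫ ω, opN (U ω) ^ (r - ((j+1:ℕ):ℝ)) ∂ℙ) / 2 := by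
    intro j hj hP
    have h := hTsingle j hj
    rw [if_pos hP] at h
    have h1 := hδ1pos j hP
    have h2 := hδMpos (hr_of_P j hP)
    have h3 := hCcnn j hP
    have h4 := hm1nn j
    have h5 := hm2nn j
    have h6 : (0:ℝ) ≤ (⌊r⌋₊:ℝ) + 1 := by positivity
    have hbnn : (0:ℝ) ≤ 2 * ((⌊r⌋₊:ℝ)+1) * (((r - (j:ℝ)) * 2 ^ (r - (j:ℝ))) *
          (∫ ω, opN (U ω) ^ (r - ((⌈r⌉₊ - 1:ℕ):ℝ)) * ‖V ω‖ ^ (((⌈r⌉₊ - 1 - j:ℕ)):ℝ) ∂ℙ))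
        / (1 - ∫ ω, opN (U ω) ^ (r - ((⌈r⌉₊ - 1:ℕ):ℝ)) ∂ℙ) :=
      div_nonneg (mul_nonneg (by positivity) (mul_nonneg h3 h5)) h2.le
    have ha : 2 * (((r - (j:ℝ)) * 2 ^ (r - (j:ℝ))) *
          (∫ ω, opN (U ω) ^ (r - (j:ℝ) - 1) * ‖V ω‖ ^ ((1:ℕ):ℝ) ∂ℙ))
        / (1 - ∫ ω, opN (U ω) ^ (r - ((j+1:ℕ):ℝ)) ∂ℙ) ≤ T := by linarith
    rw [div_le_iff₀ h1] at ha
    ring_nf at ha ⊢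
    linarith only [ha]
  have hb2T : ∀ j ∈ Finset.Icc 0 ⌊r⌋₊, 1 < r - (j:ℝ) →
      ((⌊r⌋₊:ℝ)+1) * (((r - (j:ℝ)) * 2 ^ (r - (j:ℝ))) *
        (∫ ω, opN (U ω) ^ (r - ((⌈r⌉₊ - 1:ℕ):ℝ)) * ‖V ω‖ ^ (((⌈r⌉₊ - 1 - j:ℕ)):ℝ) ∂ℙ))
      ≤ T * (1 - ∫ ω, opN (U ω) ^ (r - ((⌈r⌉₊ - 1:ℕ):ℝ)) ∂ℙ) / 2 := by
    intro j hj hP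
    have h := hTsingle j hj
    rw [if_pos hP] at h
    have h1 := hδ1pos j hP
    have h2 := hδMpos (hr_of_P j hP)
    have h3 := hCcnn j hP
    have h4 := hm1nn j
    have h5 := hm2nn j
    have hann : (0:ℝ) ≤ 2 * (((r - (j:ℝ)) * 2 ^ (r - (j:ℝ))) *
          (∫ ω, opN (U ω) ^ (r - (j:ℝ) - 1) * ‖V ω‖ ^ ((1:ℕ):ℝ) ∂ℙ))
        / (1 - ∫ ω, opN (U ω) ^ (r - ((j+1:ℕ):ℝ)) ∂ℙ) :=
      div_nonneg (mul_nonneg (by norm_num) (mul_nonneg h3 h4)) h1.le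
    have hb : 2 * ((⌊r⌋₊:ℝ)+1) * (((r - (j:ℝ)) * 2 ^ (r - (j:ℝ))) *
          (∫ ω, opN (U ω) ^ (r - ((⌈r⌉₊ - 1:ℕ):ℝ)) * ‖V ω‖ ^ (((⌈r⌉₊ - 1 - j:ℕ)):ℝ) ∂ℙ))
        / (1 - ∫ ω, opN (U ω) ^ (r - ((⌈r⌉₊ - 1:ℕ):ℝ)) ∂ℙ) ≤ T := by linarith
    rw [div_le_iff₀ h2] at hb
    ring_nf at hb ⊢
    linarith only [hb]
  -- conclusion
  refine ⟨fun k => T ^ k, fun k _ _ => pow_pos hTpos k, ?_⟩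
  intro x
  have hc0 : (fun k => T ^ k) 0 = 1 := pow_zero T
  have hX0 : (0:ℝ) ≤ ‖x‖ := norm_nonneg x
  have hWnorm : ∀ ω, ‖Matrix.toEuclideanCLM (𝕜 := ℝ) (U ω) x + V ω‖
      ≤ opN (U ω) * ‖x‖ + ‖V ω‖ := by
    intro ω
    refine (norm_add_le _ _).trans ?_
    have h1 : ‖Matrix.toEuclideanCLM (𝕜 := ℝ) (U ω) x‖ ≤ opN (U ω) * ‖x‖ :=
      ContinuousLinearMap.le_opNorm _ x
    linarith
  set Φ : ℕ → Ω → ℝ := fun j ω =>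
    opN (U ω) ^ (r - (j:ℝ)) * ‖x‖ ^ (r - (j:ℝ)) + ‖V ω‖ ^ (r - (j:ℝ)) +
      (if 1 < r - (j:ℝ) then
        ((r - (j:ℝ)) * 2 ^ (r - (j:ℝ))) *
          ((opN (U ω) ^ (r - (j:ℝ) - 1) * ‖V ω‖ ^ ((1:ℕ):ℝ)) * ‖x‖ ^ (r - (j:ℝ) - 1)
          + (opN (U ω) ^ (r - ((⌈r⌉₊ - 1:ℕ):ℝ)) * ‖V ω‖ ^ (((⌈r⌉₊ - 1 - j:ℕ)):ℝ)) *
              ‖x‖ ^ (r - ((⌈r⌉₊ - 1:ℕ):ℝ)))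
       else 0) with hΦdef
  have hΦpt : ∀ j ∈ Finset.Icc 0 ⌊r⌋₊, ∀ ω,
      ‖Matrix.toEuclideanCLM (𝕜 := ℝ) (U ω) x + V ω‖ ^ (r - (j:ℝ)) ≤ Φ j ω := by
    intro j hj ω
    rw [Finset.mem_Icc] at hj
    have hsj' : 0 ≤ r - (j:ℝ) := hsj j hj.2
    have h1 : ‖Matrix.toEuclideanCLM (𝕜 := ℝ) (U ω) x + V ω‖ ^ (r - (j:ℝ))
        ≤ (opN (U ω) * ‖x‖ + ‖V ω‖) ^ (r - (j:ℝ)) :=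
      Real.rpow_le_rpow (norm_nonneg _) (hWnorm ω) hsj'
    refine h1.trans ?_
    have haX : 0 ≤ opN (U ω) * ‖x‖ := mul_nonneg (hA0 ω) hX0
    by_cases hP : 1 < r - (j:ℝ)
    · simp only [hΦdef, if_pos hP]
      have hkey := my_key_cross (s := r - (j:ℝ)) (τ := r - ((⌈r⌉₊ - 1:ℕ):ℝ))
        hP.le hτ0 hτ1 haX (hB0 ω)
      refine hkey.trans (le_of_eq ?_)
      have e1 : (opN (U ω) * ‖x‖) ^ (r - (j:ℝ))
          = opN (U ω) ^ (r - (j:ℝ)) * ‖x‖ ^ (r - (j:ℝ)) := Real.mul_rpow (hA0 ω) hX0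
      have e2 : (opN (U ω) * ‖x‖) ^ (r - (j:ℝ) - 1)
          = opN (U ω) ^ (r - (j:ℝ) - 1) * ‖x‖ ^ (r - (j:ℝ) - 1) := Real.mul_rpow (hA0 ω) hX0
      have e3 : (opN (U ω) * ‖x‖) ^ (r - ((⌈r⌉₊ - 1:ℕ):ℝ))
          = opN (U ω) ^ (r - ((⌈r⌉₊ - 1:ℕ):ℝ)) * ‖x‖ ^ (r - ((⌈r⌉₊ - 1:ℕ):ℝ)) :=
        Real.mul_rpow (hA0 ω) hX0
      have e4 : ‖V ω‖ ^ (r - (j:ℝ) - (r - ((⌈r⌉₊ - 1:ℕ):ℝ)))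
          = ‖V ω‖ ^ (((⌈r⌉₊ - 1 - j:ℕ)):ℝ) := by
        congr 1
        have hjle : j ≤ ⌈r⌉₊ - 1 := (hjM j hP).le
        have : ((⌈r⌉₊ - 1 - j:ℕ):ℝ) = ((⌈r⌉₊ - 1:ℕ):ℝ) - (j:ℝ) := by
          push_cast [Nat.cast_sub hjle]
          ring
        rw [this]
        ring
      have e5 : ‖V ω‖ ^ ((1:ℕ):ℝ) = ‖V ω‖ := by
        rw [Nat.cast_one, Real.rpow_one]
      rw [e1, e2, e3, e4, e5]
      ring
    · simp only [hΦdef, if_neg hP, add_zero]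
      have h2 := my_rpow_add_le haX (hB0 ω) hsj' (le_of_not_gt hP)
      have e1 : (opN (U ω) * ‖x‖) ^ (r - (j:ℝ))
          = opN (U ω) ^ (r - (j:ℝ)) * ‖x‖ ^ (r - (j:ℝ)) := Real.mul_rpow (hA0 ω) hX0
      rw [e1] at h2
      exact h2
  have hΦint : ∀ j ∈ Finset.Icc 0 ⌊r⌋₊, Integrable (Φ j) ℙ := by
    intro j hj
    rw [Finset.mem_Icc] at hj
    have hsj' : 0 ≤ r - (j:ℝ) := hsj j hj.2
    have hjr : (j:ℝ) ≥ 0 := Nat.cast_nonneg j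
    have i1 : Integrable (fun ω => opN (U ω) ^ (r - (j:ℝ)) * ‖x‖ ^ (r - (j:ℝ))) ℙ :=
      (hAint _ hsj' (by linarith)).mul_const _
    have i2 : Integrable (fun ω => ‖V ω‖ ^ (r - (j:ℝ))) ℙ := hBint _ hsj' (by linarith)
    by_cases hP : 1 < r - (j:ℝ)
    · have h1r := hr_of_P j hP
      have hjM' := hjM j hP
      have h1N : 1 ≤ ⌊r⌋₊ := Nat.le_floor (by push_cast; linarith)
      have i3 : Integrable
          (fun ω => opN (U ω) ^ (r - (j:ℝ) - 1) * ‖V ω‖ ^ ((1:ℕ):ℝ)) ℙ := by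
        refine hABint (r - (j:ℝ) - 1) 1 (by linarith) (by push_cast; linarith) h1N
      have hcast2 : ((⌈r⌉₊ - 1 - j:ℕ):ℝ) = ((⌈r⌉₊ - 1:ℕ):ℝ) - (j:ℝ) := by
        push_cast [Nat.cast_sub hjM'.le]
        ring
      have i4 : Integrable
          (fun ω => opN (U ω) ^ (r - ((⌈r⌉₊ - 1:ℕ):ℝ)) *
            ‖V ω‖ ^ (((⌈r⌉₊ - 1 - j:ℕ)):ℝ)) ℙ := by
        refine hABint (r - ((⌈r⌉₊ - 1:ℕ):ℝ)) (⌈r⌉₊ - 1 - j) hτ0.le ?_ (by omega)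
        rw [hcast2]
        linarith
      have itot := ((i3.mul_const (‖x‖ ^ (r - (j:ℝ) - 1))).add
        (i4.mul_const (‖x‖ ^ (r - ((⌈r⌉₊ - 1:ℕ):ℝ))))).const_mul
        ((r - (j:ℝ)) * 2 ^ (r - (j:ℝ)))
      have := (i1.add i2).add itot
      simpa only [hΦdef, if_pos hP, Pi.add_def] using this
    · have := i1.add i2
      simp only [hΦdef, if_neg hP]
      simpa [Pi.add_def] using this
  have hΦval : ∀ j ∈ Finset.Icc 0 ⌊r⌋₊, ∫ ω, Φ j ω ∂ℙ
      = (∫ ω, opN (U ω) ^ (r - (j:ℝ)) ∂ℙ) * ‖x‖ ^ (r - (j:ℝ))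
        + (∫ ω, ‖V ω‖ ^ (r - (j:ℝ)) ∂ℙ)
        + (if 1 < r - (j:ℝ) then
            ((r - (j:ℝ)) * 2 ^ (r - (j:ℝ))) *
              ((∫ ω, opN (U ω) ^ (r - (j:ℝ) - 1) * ‖V ω‖ ^ ((1:ℕ):ℝ) ∂ℙ) * ‖x‖ ^ (r - (j:ℝ) - 1)
              + (∫ ω, opN (U ω) ^ (r - ((⌈r⌉₊ - 1:ℕ):ℝ)) *
                  ‖V ω‖ ^ (((⌈r⌉₊ - 1 - j:ℕ)):ℝ) ∂ℙ) * ‖x‖ ^ (r - ((⌈r⌉₊ - 1:ℕ):ℝ)))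
          else 0) := by
    intro j hj
    rw [Finset.mem_Icc] at hj
    have hsj' : 0 ≤ r - (j:ℝ) := hsj j hj.2
    have hjr : (j:ℝ) ≥ 0 := Nat.cast_nonneg j
    have i1 : Integrable (fun ω => opN (U ω) ^ (r - (j:ℝ)) * ‖x‖ ^ (r - (j:ℝ))) ℙ :=
      (hAint _ hsj' (by linarith)).mul_const _
    have i2 : Integrable (fun ω => ‖V ω‖ ^ (r - (j:ℝ))) ℙ := hBint _ hsj' (by linarith)
    by_cases hP : 1 < r - (j:ℝ)
    · have h1r := hr_of_P j hP
      have hjM' := hjM j hP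
      have h1N : 1 ≤ ⌊r⌋₊ := Nat.le_floor (by push_cast; linarith)
      have i3 : Integrable
          (fun ω => opN (U ω) ^ (r - (j:ℝ) - 1) * ‖V ω‖ ^ ((1:ℕ):ℝ)) ℙ :=
        hABint (r - (j:ℝ) - 1) 1 (by linarith) (by push_cast; linarith) h1N
      have hcast2 : ((⌈r⌉₊ - 1 - j:ℕ):ℝ) = ((⌈r⌉₊ - 1:ℕ):ℝ) - (j:ℝ) := by
        push_cast [Nat.cast_sub hjM'.le]
        ring
      have i4 : Integrable
          (fun ω => opN (U ω) ^ (r - ((⌈r⌉₊ - 1:ℕ):ℝ)) *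
            ‖V ω‖ ^ (((⌈r⌉₊ - 1 - j:ℕ)):ℝ)) ℙ := by
        refine hABint (r - ((⌈r⌉₊ - 1:ℕ):ℝ)) (⌈r⌉₊ - 1 - j) hτ0.le ?_ (by omega)
        rw [hcast2]
        linarith
      have i12 : Integrable (fun ω =>
          opN (U ω) ^ (r - (j:ℝ)) * ‖x‖ ^ (r - (j:ℝ)) + ‖V ω‖ ^ (r - (j:ℝ))) ℙ := i1.add i2
      have i3x : Integrable (fun ω =>
          opN (U ω) ^ (r - (j:ℝ) - 1) * ‖V ω‖ ^ ((1:ℕ):ℝ) * ‖x‖ ^ (r - (j:ℝ) - 1)) ℙ :=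
        i3.mul_const _
      have i4x : Integrable (fun ω =>
          opN (U ω) ^ (r - ((⌈r⌉₊ - 1:ℕ):ℝ)) * ‖V ω‖ ^ (((⌈r⌉₊ - 1 - j:ℕ)):ℝ) *
            ‖x‖ ^ (r - ((⌈r⌉₊ - 1:ℕ):ℝ))) ℙ := i4.mul_const _
      have i34 : Integrable (fun ω =>
          opN (U ω) ^ (r - (j:ℝ) - 1) * ‖V ω‖ ^ ((1:ℕ):ℝ) * ‖x‖ ^ (r - (j:ℝ) - 1)
          + opN (U ω) ^ (r - ((⌈r⌉₊ - 1:ℕ):ℝ)) * ‖V ω‖ ^ (((⌈r⌉₊ - 1 - j:ℕ)):ℝ) *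
              ‖x‖ ^ (r - ((⌈r⌉₊ - 1:ℕ):ℝ))) ℙ := i3x.add i4x
      have icr : Integrable (fun ω =>
          ((r - (j:ℝ)) * 2 ^ (r - (j:ℝ))) *
            (opN (U ω) ^ (r - (j:ℝ) - 1) * ‖V ω‖ ^ ((1:ℕ):ℝ) * ‖x‖ ^ (r - (j:ℝ) - 1)
            + opN (U ω) ^ (r - ((⌈r⌉₊ - 1:ℕ):ℝ)) * ‖V ω‖ ^ (((⌈r⌉₊ - 1 - j:ℕ)):ℝ) *
                ‖x‖ ^ (r - ((⌈r⌉₊ - 1:ℕ):ℝ)))) ℙ := i34.const_mul _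
      simp only [hΦdef, if_pos hP]
      rw [integral_add i12 icr, integral_add i1 i2,
        integral_mul_const, integral_const_mul, integral_add i3x i4x,
        integral_mul_const, integral_mul_const]
    · simp only [hΦdef, if_neg hP, add_zero]
      rw [integral_add i1 i2, integral_mul_const]
  -- main chain
  have hint_sum : Integrable (fun ω => ∑ j ∈ Finset.Icc 0 ⌊r⌋₊, T ^ j * Φ j ω) ℙ :=
    integrable_finset_sum _ (fun j hj => (hΦint j hj).const_mul _)
  have step1 : (∫ ω, lyapG r (fun k => T ^ k) (Matrix.toEuclideanCLM (𝕜 := ℝ) (U ω) x + V ω) ∂ℙ)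
      ≤ ∫ ω, ∑ j ∈ Finset.Icc 0 ⌊r⌋₊, T ^ j * Φ j ω ∂ℙ := by
    refine integral_mono_of_nonneg (Filter.Eventually.of_forall fun ω =>
      lyapG_nonneg r _ (fun k => (pow_pos hTpos k).le) _) hint_sum
      (Filter.Eventually.of_forall fun ω => ?_)
    show lyapG r (fun k => T ^ k) (Matrix.toEuclideanCLM (𝕜 := ℝ) (U ω) x + V ω)
        ≤ ∑ j ∈ Finset.Icc 0 ⌊r⌋₊, T ^ j * Φ j ω
    rw [lyapG_sum r (fun k => T ^ k) hc0]
    exact Finset.sum_le_sum fun j hj =>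
      mul_le_mul_of_nonneg_left (hΦpt j hj ω) (pow_nonneg hTpos.le j)
  have step2 : (∫ ω, ∑ j ∈ Finset.Icc 0 ⌊r⌋₊, T ^ j * Φ j ω ∂ℙ)
      = ∑ j ∈ Finset.Icc 0 ⌊r⌋₊, T ^ j * ∫ ω, Φ j ω ∂ℙ := by
    rw [integral_finset_sum _ (fun j hj => (hΦint j hj).const_mul _)]
    exact Finset.sum_congr rfl fun j hj => integral_const_mul _ _
  have step3 : ∑ j ∈ Finset.Icc 0 ⌊r⌋₊, T ^ j * ∫ ω, Φ j ω ∂ℙ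
      = (∑ j ∈ Finset.Icc 0 ⌊r⌋₊, T ^ j *
          ((∫ ω, opN (U ω) ^ (r - (j:ℝ)) ∂ℙ) * ‖x‖ ^ (r - (j:ℝ))
          + (if 1 < r - (j:ℝ) then
              ((r - (j:ℝ)) * 2 ^ (r - (j:ℝ))) *
                ((∫ ω, opN (U ω) ^ (r - (j:ℝ) - 1) * ‖V ω‖ ^ ((1:ℕ):ℝ) ∂ℙ)
                    * ‖x‖ ^ (r - (j:ℝ) - 1)
                + (∫ ω, opN (U ω) ^ (r - ((⌈r⌉₊ - 1:ℕ):ℝ)) *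
                    ‖V ω‖ ^ (((⌈r⌉₊ - 1 - j:ℕ)):ℝ) ∂ℙ) * ‖x‖ ^ (r - ((⌈r⌉₊ - 1:ℕ):ℝ)))
            else 0)))
        + ∑ j ∈ Finset.Icc 0 ⌊r⌋₊, T ^ j * ∫ ω, ‖V ω‖ ^ (r - (j:ℝ)) ∂ℙ := by
    rw [← Finset.sum_add_distrib]
    refine Finset.sum_congr rfl fun j hj => ?_
    rw [hΦval j hj]
    ring
  have habs : (∑ j ∈ Finset.Icc 0 ⌊r⌋₊, T ^ j *
          ((∫ ω, opN (U ω) ^ (r - (j:ℝ)) ∂ℙ) * ‖x‖ ^ (r - (j:ℝ))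
          + (if 1 < r - (j:ℝ) then
              ((r - (j:ℝ)) * 2 ^ (r - (j:ℝ))) *
                ((∫ ω, opN (U ω) ^ (r - (j:ℝ) - 1) * ‖V ω‖ ^ ((1:ℕ):ℝ) ∂ℙ)
                    * ‖x‖ ^ (r - (j:ℝ) - 1)
                + (∫ ω, opN (U ω) ^ (r - ((⌈r⌉₊ - 1:ℕ):ℝ)) *
                    ‖V ω‖ ^ (((⌈r⌉₊ - 1 - j:ℕ)):ℝ) ∂ℙ) * ‖x‖ ^ (r - ((⌈r⌉₊ - 1:ℕ):ℝ)))
            else 0)))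
      ≤ ∑ j ∈ Finset.Icc 0 ⌊r⌋₊, T ^ j * ‖x‖ ^ (r - (j:ℝ)) := by
    refine my_absorb ⌊r⌋₊ (⌈r⌉₊ - 1) r (r - ((⌈r⌉₊ - 1:ℕ):ℝ)) T ‖x‖
      (fun m => ∫ ω, opN (U ω) ^ (r - (m:ℝ)) ∂ℙ)
      (fun j => (r - (j:ℝ)) * 2 ^ (r - (j:ℝ)))
      (fun j => ∫ ω, opN (U ω) ^ (r - (j:ℝ) - 1) * ‖V ω‖ ^ ((1:ℕ):ℝ) ∂ℙ)
      (fun j => ∫ ω, opN (U ω) ^ (r - ((⌈r⌉₊ - 1:ℕ):ℝ)) * ‖V ω‖ ^ (((⌈r⌉₊ - 1 - j:ℕ)):ℝ) ∂ℙ)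
      hX0 hT1 hρ0le hρle hM1 hMN rfl hjM ?_ hb1T hb2T
    intro j _ hP
    exact ⟨mul_nonneg (hCcnn j hP) (hm1nn j), mul_nonneg (hCcnn j hP) (hm2nn j)⟩
  have hgx : lyapG r (fun k => T ^ k) x
      = ∑ j ∈ Finset.Icc 0 ⌊r⌋₊, T ^ j * ‖x‖ ^ (r - (j:ℝ)) := by
    rw [lyapG_sum r (fun k => T ^ k) hc0]
  have hgV : (∫ ω, lyapG r (fun k => T ^ k) (V ω) ∂ℙ)
      = ∑ j ∈ Finset.Icc 0 ⌊r⌋₊, T ^ j * ∫ ω, ‖V ω‖ ^ (r - (j:ℝ)) ∂ℙ := by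
    have he : (fun ω => lyapG r (fun k => T ^ k) (V ω))
        = fun ω => ∑ j ∈ Finset.Icc 0 ⌊r⌋₊, T ^ j * ‖V ω‖ ^ (r - (j:ℝ)) :=
      funext fun ω => lyapG_sum r _ hc0 (V ω)
    rw [he, integral_finset_sum _ (fun j hj => ?_)]
    · exact Finset.sum_congr rfl fun j hj => integral_const_mul _ _
    · rw [Finset.mem_Icc] at hj
      have hjr : (j:ℝ) ≥ 0 := Nat.cast_nonneg j
      exact (hBint _ (hsj j hj.2) (by linarith)).const_mul _
  linarith [step1, step2.symm ▸ step1]
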